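/- With the Lidstone polynomials Λ_k defined by Λ_0(x) = x, Λ_k'' = Λ_{k-1}, Λ_k(0) = Λ_k(1) = 0 for k ≥ 1, one has for every k ≥ 1: Λ_k(x) = x^{2k+1}/(2k+1)! − ∑_{j=0}^{k-1} Λ_j(x)/(2k+1−2j)!. -/

import Mathlib

open Polynomial Finset

lemma lidstone_unique_aux (p : Polynomial ℝ) (h2 : derivative (derivative p) = 0)
    (he0 : p.eval 0 = 0) (he1 : p.eval 1 = 0) : p = 0 := by
  obtain ⟨a, ha⟩ : ∃ a, derivative p = C a :=
    ⟨_, Polynomial.eq_C_of_natDegree_eq_zero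
      (Polynomial.natDegree_eq_zero_of_derivative_eq_zero h2)⟩
  have hb : derivative (p - C a * X) = 0 := by simp [ha]
  obtain ⟨b, hb'⟩ : ∃ b, p - C a * X = C b :=
    ⟨_, Polynomial.eq_C_of_natDegree_eq_zero
      (Polynomial.natDegree_eq_zero_of_derivative_eq_zero hb)⟩
  have hp : p = C a * X + C b := by linear_combination hb'
  have e0 : b = 0 := by
    have := he0; rw [hp] at this; simpa using this
  have e1 : a + b = 0 := by
    have := he1; rw [hp] at this; simpa using this
  have : a = 0 := by linarith
  rw [hp, this, e0]; simp

theorem lidstone_recursion (Λ : ℕ → Polynomial ℝ)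
    (h0 : Λ 0 = Polynomial.X)
    (hrec : ∀ k : ℕ, 1 ≤ k →
      Polynomial.derivative (Polynomial.derivative (Λ k)) = Λ (k - 1))
    (hval : ∀ k : ℕ, 1 ≤ k → (Λ k).eval 0 = 0 ∧ (Λ k).eval 1 = 0) :
    ∀ k : ℕ, 1 ≤ k →
      Λ k = Polynomial.C (1 / ((2 * k + 1).factorial : ℝ)) * Polynomial.X ^ (2 * k + 1)
        - ∑ j ∈ Finset.range k,
            Polynomial.C (1 / ((2 * k + 1 - 2 * j).factorial : ℝ)) * Λ j := by
  set F : ℕ → Polynomial ℝ := fun m =>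
    C (1 / ((2 * m + 1).factorial : ℝ)) * X ^ (2 * m + 1)
      - ∑ j ∈ Finset.range m, C (1 / ((2 * m + 1 - 2 * j).factorial : ℝ)) * Λ j with hF
  have heval0 : ∀ j, (Λ j).eval 0 = 0 := by
    intro j
    cases j with
    | zero => simp [h0]
    | succ n => exact (hval (n+1) (Nat.succ_le_succ (Nat.zero_le n))).1
  have heval1 : ∀ j, 1 ≤ j → (Λ j).eval 1 = 0 := fun j hj => (hval j hj).2
  -- second derivative of F (m+1) is F m
  have hderiv : ∀ m : ℕ, derivative (derivative (F (m+1))) = F m := by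
    intro m
    have hsum : ∑ j ∈ Finset.range (m+1),
        C (1 / ((2 * (m+1) + 1 - 2 * j).factorial : ℝ)) * Λ j
        = (∑ j ∈ Finset.range m,
            C (1 / ((2 * m + 1 - 2 * j).factorial : ℝ)) * Λ (j+1))
          + C (1 / ((2 * (m+1) + 1).factorial : ℝ)) * Λ 0 := by
      rw [Finset.sum_range_succ']
      congr 1
      · apply Finset.sum_congr rfl
        intro j _
        have he : 2 * (m+1) + 1 - 2 * (j+1) = 2 * m + 1 - 2 * j := by omega
        rw [he]
    rw [hF]
    simp only
    rw [hsum, map_sub, map_sub, map_add, map_add, map_sum, map_sum]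
    have hΛ0 : derivative (derivative (C (1 / ((2 * (m+1) + 1).factorial : ℝ)) * Λ 0)) = 0 := by
      rw [h0]; simp
    rw [hΛ0]
    have hterm : ∀ j, derivative (derivative
        (C (1 / ((2 * m + 1 - 2 * j).factorial : ℝ)) * Λ (j+1)))
        = C (1 / ((2 * m + 1 - 2 * j).factorial : ℝ)) * Λ j := by
      intro j
      rw [derivative_C_mul, derivative_C_mul, hrec (j+1) (Nat.succ_le_succ (Nat.zero_le j))]
      simp
    simp only [hterm]
    have hX : derivative (derivative
        (C (1 / ((2 * (m+1) + 1).factorial : ℝ)) * X ^ (2 * (m+1) + 1)))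
        = C (1 / ((2 * m + 1).factorial : ℝ)) * X ^ (2 * m + 1) := by
      rw [derivative_C_mul, derivative_X_pow, derivative_C_mul, derivative_C_mul,
        derivative_X_pow]
      have e3 : 2 * (m+1) + 1 - 1 - 1 = 2 * m + 1 := by omega
      have e2 : 2 * (m+1) + 1 - 1 = 2 * m + 2 := by omega
      rw [e3, e2]
      have hcomb : C (1 / ((2 * (m+1) + 1).factorial : ℝ)) *
          (C ((2 * (m+1) + 1 : ℕ) : ℝ) * (C ((2 * m + 2 : ℕ) : ℝ) * X ^ (2 * m + 1)))
          = C ((1 / ((2 * (m+1) + 1).factorial : ℝ)) * ((2 * (m+1) + 1 : ℕ) : ℝ)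
              * ((2 * m + 2 : ℕ) : ℝ)) * X ^ (2 * m + 1) := by
        rw [C_mul, C_mul]; ring
      rw [hcomb]
      congr 1
      have hfac : ((2 * (m+1) + 1).factorial : ℝ)
          = ((2 * (m+1) + 1 : ℕ) : ℝ) * (((2 * m + 2 : ℕ) : ℝ) * ((2 * m + 1).factorial : ℝ)) := by
        rw [show 2 * (m+1) + 1 = (2 * m + 2) + 1 from by ring, Nat.factorial_succ,
          show 2 * m + 2 = (2 * m + 1) + 1 from rfl, Nat.factorial_succ]
        push_cast; ring
      have hne : ((2 * m + 1).factorial : ℝ) ≠ 0 := by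
        exact_mod_cast Nat.factorial_ne_zero _
      have h2ne : ((2 * (m+1) + 1 : ℕ) : ℝ) ≠ 0 := by positivity
      have h2ne' : ((2 * m + 2 : ℕ) : ℝ) ≠ 0 := by positivity
      rw [hfac]
      field_simp
    rw [hX]
    ring
  have main : ∀ m : ℕ, Λ m = F m := by
    intro m
    induction m with
    | zero => rw [h0, hF]; simp
    | succ n ih =>
      have hd : derivative (derivative (Λ (n+1) - F (n+1))) = 0 := by
        rw [map_sub, map_sub, hderiv n, hrec (n+1) (Nat.succ_le_succ (Nat.zero_le n))]
        simp [Nat.add_sub_cancel, ih]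
      have hF0 : (F (n+1)).eval 0 = 0 := by
        rw [hF]; simp [eval_finset_sum, heval0]
      have hF1 : (F (n+1)).eval 1 = 0 := by
        rw [hF]
        simp only [eval_sub, eval_mul, eval_pow, eval_C, eval_X, eval_finset_sum, one_pow, mul_one]
        rw [Finset.sum_eq_single 0]
        · simp [h0]
        · intro j _ hj
          rw [heval1 j (Nat.one_le_iff_ne_zero.mpr hj)]; ring
        · simp
      have := lidstone_unique_aux (Λ (n+1) - F (n+1)) hd
        (by simp [heval0, hF0]) (by simp [heval1 (n+1) (Nat.succ_le_succ (Nat.zero_le n)), hF1])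
      have := sub_eq_zero.mp this
      exact this
  intro k _
  exact main k
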